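/- Every word w over {a,b,c,d} can be rewritten, using the identities a²=b²=c²=d²=1, bc=cb=d, cd=dc=b, db=bd=c, to a unique reduced word, where a word is reduced if it contains none of aa, bb, cc, dd, bc, cb, bd, db, cd, dc as a factor. -/

import Mathlib

/-- The alphabet `{a, b, c, d}` of generators of the Grigorchuk group. -/
inductive Glet : Type
  | a | b | c | d
deriving DecidableEq

open Glet

/-- The reducing rewriting rules induced by the relations `a²=b²=c²=d²=1`,
`bc=cb=d`, `cd=dc=b`, `db=bd=c`: a square `xx` is replaced by the empty word,
and a factor `xy` with `x ≠ y`, `x, y ∈ {b,c,d}` by the third letter of `{b,c,d}`. -/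
inductive GrigRule : List Glet → List Glet → Prop
  | aa : GrigRule [a, a] []
  | bb : GrigRule [b, b] []
  | cc : GrigRule [c, c] []
  | dd : GrigRule [d, d] []
  | bc : GrigRule [b, c] [d]
  | cb : GrigRule [c, b] [d]
  | cd : GrigRule [c, d] [b]
  | dc : GrigRule [d, c] [b]
  | db : GrigRule [d, b] [c]
  | bd : GrigRule [b, d] [c]

/-- One reducing rewrite step: replace a factor which is a left-hand side of a
rule by the corresponding right-hand side. -/
def GrigRed (w w' : List Glet) : Prop :=
  ∃ (u v l r : List Glet), GrigRule l r ∧ w = u ++ l ++ v ∧ w' = u ++ r ++ v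

/-- A word is reduced if it contains none of
`aa, bb, cc, dd, bc, cb, bd, db, cd, dc` as a factor, i.e. no factor `xy` with
`x = y` or with both `x` and `y` in `{b,c,d}`. -/
def GrigReduced (w : List Glet) : Prop :=
  ∀ (u v : List Glet) (x y : Glet), w = u ++ [x, y] ++ v → ¬(x = y ∨ (x ≠ a ∧ y ≠ a))

instance : Fintype Glet :=
  ⟨{Glet.a, Glet.b, Glet.c, Glet.d}, by intro x; cases x <;> simp⟩

/-- An adjacent pair `x y` is allowed in a reduced word. -/
def Ok (x y : Glet) : Prop := ¬(x = y ∨ (x ≠ a ∧ y ≠ a))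

instance (x y : Glet) : Decidable (Ok x y) := by unfold Ok; infer_instance

/-- The third letter of `{b,c,d}`. -/
def third (x y : Glet) : Glet :=
  match x, y with
  | b, c => d | c, b => d
  | c, d => b | d, c => b
  | b, d => c | d, b => c
  | _, _ => a

def normCons (x : Glet) : List Glet → List Glet
  | [] => [x]
  | y :: t =>
    if x = y then t
    else if x ≠ a ∧ y ≠ a then third x y :: t
    else x :: y :: t

def norm (w : List Glet) : List Glet := w.foldr normCons []

lemma third_ne_a : ∀ x y : Glet, x ≠ a → y ≠ a → x ≠ y → third x y ≠ a := by decide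
lemma third_ne_left : ∀ x y : Glet, x ≠ a → y ≠ a → x ≠ y → third x y ≠ x := by decide
lemma third_ne_right : ∀ x y : Glet, x ≠ a → y ≠ a → x ≠ y → third x y ≠ y := by decide
lemma third_third : ∀ x y : Glet, x ≠ a → y ≠ a → x ≠ y → third x (third x y) = y := by decide
lemma third_third' : ∀ x y : Glet, x ≠ a → y ≠ a → x ≠ y → third (third x y) y = x := by decide
lemma eq_third : ∀ x y z : Glet, x ≠ a → y ≠ a → z ≠ a →
    x ≠ y → x ≠ z → y ≠ z → x = third y z := by decide
lemma ok_right_eq_a : ∀ x y : Glet, Ok x y → x ≠ a → y = a := by decide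
lemma ok_of_ne_a : ∀ x : Glet, x ≠ a → Ok x a := by decide
lemma tA : ∀ y z : Glet, y ≠ a → z ≠ a → y ≠ z → third z (third y z) = y := by decide
lemma tB : ∀ y z : Glet, y ≠ a → z ≠ a → y ≠ z → third (third z y) z = y := by decide
lemma tC : ∀ y z : Glet, y ≠ a → z ≠ a → y ≠ z → third (third y z) y = z := by decide

lemma chain_of_red : ∀ {l : List Glet}, GrigReduced l → List.Chain' Ok l := by
  intro l
  induction l with
  | nil => intro _; exact List.isChain_nil
  | cons x t ih =>
    intro h
    cases t with
    | nil => exact List.isChain_singleton x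
    | cons y t' =>
      refine List.isChain_cons_cons.mpr ?_
      refine ⟨h [] t' x y rfl, ih ?_⟩
      intro u v x' y' huv hxy
      exact h (x :: u) v x' y' (by simp [huv]) hxy

lemma red_of_chain : ∀ {l : List Glet}, List.Chain' Ok l → GrigReduced l := by
  intro l hl u v x y huv
  subst huv
  have h1 : List.Chain' Ok ([x, y] ++ v) := hl.suffix ⟨u, by simp⟩
  exact (List.isChain_cons_cons.mp h1).1

lemma normCons_eq_cons {x : Glet} {t : List Glet} (h : List.Chain' Ok (x :: t)) :
    normCons x t = x :: t := by
  cases t with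
  | nil => rfl
  | cons z t' =>
    have hok : Ok x z := (List.isChain_cons_cons.mp h).1
    have hxz : x ≠ z := fun he => hok (Or.inl he)
    have hna : ¬(x ≠ a ∧ z ≠ a) := fun he => hok (Or.inr he)
    simp [normCons, hxz, hna]

lemma chain_normCons {x : Glet} {t : List Glet} (h : List.Chain' Ok t) :
    List.Chain' Ok (normCons x t) := by
  cases t with
  | nil => exact List.isChain_singleton x
  | cons y t' =>
    by_cases hxy : x = y
    · simp only [normCons, if_pos hxy]
      exact h.tail
    · by_cases hna : x ≠ a ∧ y ≠ a
      · simp only [normCons, if_neg hxy, if_pos hna]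
        cases t' with
        | nil => exact List.isChain_singleton _
        | cons z t'' =>
          refine List.isChain_cons_cons.mpr ?_
          have hz : z = a := ok_right_eq_a y z (List.isChain_cons_cons.mp h).1 hna.2
          subst hz
          exact ⟨ok_of_ne_a _ (third_ne_a x y hna.1 hna.2 hxy), h.tail⟩
      · simp only [normCons, if_neg hxy, if_neg hna]
        refine List.isChain_cons_cons.mpr ?_
        exact ⟨fun hc => hc.elim hxy hna, h⟩

lemma chain_norm (w : List Glet) : List.Chain' Ok (norm w) := by
  induction w with
  | nil => exact List.isChain_nil
  | cons x t ih => exact chain_normCons ih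

lemma norm_fixed : ∀ {l : List Glet}, List.Chain' Ok l → norm l = l := by
  intro l
  induction l with
  | nil => intro _; rfl
  | cons x t ih =>
    intro h
    show normCons x (norm t) = x :: t
    rw [ih h.tail]
    exact normCons_eq_cons h

lemma nc_nc_same (x : Glet) : ∀ {m : List Glet}, List.Chain' Ok m →
    normCons x (normCons x m) = m := by
  intro m hm
  cases m with
  | nil => simp [normCons]
  | cons y t =>
    by_cases hxy : x = y
    · subst hxy
      simp only [normCons, if_pos rfl]
      exact normCons_eq_cons hm
    · by_cases hna : x ≠ a ∧ y ≠ a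
      · simp only [normCons, if_neg hxy, if_pos hna]
        have h1 : x ≠ third x y := (third_ne_left x y hna.1 hna.2 hxy).symm
        have h2 : third x y ≠ a := third_ne_a x y hna.1 hna.2 hxy
        simp [normCons, h1, hna.1, h2, third_third x y hna.1 hna.2 hxy]
      · simp [normCons, hxy, hna]

lemma nc_nc_diff (x y : Glet) (hx : x ≠ a) (hy : y ≠ a) (hxy : x ≠ y) :
    ∀ {m : List Glet}, List.Chain' Ok m →
    normCons x (normCons y m) = normCons (third x y) m := by
  intro m hm
  cases m with
  | nil => simp [normCons, hxy, hx, hy]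
  | cons z t =>
    by_cases hyz : y = z
    · subst hyz
      simp only [normCons, if_pos rfl]
      have h1 : third x y ≠ y := third_ne_right x y hx hy hxy
      have h2 : third x y ≠ a := third_ne_a x y hx hy hxy
      rw [if_neg h1, if_pos (And.intro h2 hy), third_third' x y hx hy hxy]
      cases t with
      | nil => rfl
      | cons z' t' =>
        have hz' : z' = a := ok_right_eq_a y z' (List.isChain_cons_cons.mp hm).1 hy
        subst hz'
        have h3 : ¬(x ≠ a ∧ (a : Glet) ≠ a) := fun hc => hc.2 rfl
        simp [normCons, hx, h3]
    · by_cases hz : z = a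
      · subst hz
        have hy2 : ¬(y ≠ a ∧ (a : Glet) ≠ a) := fun hc => hc.2 rfl
        have h2 : third x y ≠ a := third_ne_a x y hx hy hxy
        simp [normCons, hy, hy2, hxy, hx, h2]
      · simp only [normCons, if_neg hyz, if_pos (And.intro hy hz)]
        by_cases hxz : x = z
        · subst hxz
          have h1 : x ≠ third y x := (third_ne_right y x hy hx (Ne.symm hxy)).symm
          have h2 : third y x ≠ a := third_ne_a y x hy hx (Ne.symm hxy)
          rw [if_neg h1, if_pos (And.intro hx h2), tA y x hy hx (Ne.symm hxy)]
          have h3 : third x y ≠ x := third_ne_left x y hx hy hxy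
          have h4 : third x y ≠ a := third_ne_a x y hx hy hxy
          rw [if_neg h3, if_pos (And.intro h4 hx), tB y x hy hx (Ne.symm hxy)]
        · have hxt : x = third y z := eq_third x y z hx hy hz hxy hxz hyz
          rw [← hxt, if_pos rfl]
          have h5 : third x y = z := by rw [hxt]; exact tC y z hy hz hyz
          rw [h5, if_pos rfl]

lemma norm_rule {l r : List Glet} (h : GrigRule l r) {m : List Glet}
    (hm : List.Chain' Ok m) :
    List.foldr normCons m l = List.foldr normCons m r := by
  cases h with
  | aa => exact nc_nc_same a hm
  | bb => exact nc_nc_same b hm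
  | cc => exact nc_nc_same c hm
  | dd => exact nc_nc_same d hm
  | bc => exact nc_nc_diff b c (by decide) (by decide) (by decide) hm
  | cb => exact nc_nc_diff c b (by decide) (by decide) (by decide) hm
  | cd => exact nc_nc_diff c d (by decide) (by decide) (by decide) hm
  | dc => exact nc_nc_diff d c (by decide) (by decide) (by decide) hm
  | db => exact nc_nc_diff d b (by decide) (by decide) (by decide) hm
  | bd => exact nc_nc_diff b d (by decide) (by decide) (by decide) hm

lemma norm_step {w w' : List Glet} (h : GrigRed w w') : norm w = norm w' := by
  obtain ⟨u, v, l, r, hrule, hw, hw'⟩ := h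
  subst hw; subst hw'
  show List.foldr normCons [] (u ++ l ++ v) = List.foldr normCons [] (u ++ r ++ v)
  rw [List.append_assoc, List.append_assoc, List.foldr_append, List.foldr_append,
    List.foldr_append, List.foldr_append]
  congr 1
  exact norm_rule hrule (chain_norm v)

lemma norm_rtg {w w' : List Glet} (h : Relation.ReflTransGen GrigRed w w') :
    norm w = norm w' := by
  induction h with
  | refl => rfl
  | tail _ hstep ih => rw [ih, norm_step hstep]

lemma red_cons (x : Glet) {l l' : List Glet} (h : GrigRed l l') :
    GrigRed (x :: l) (x :: l') := by
  obtain ⟨u, v, ll, r, hrule, hw, hw'⟩ := h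
  exact ⟨x :: u, v, ll, r, hrule, by simp [hw], by simp [hw']⟩

lemma rtg_cons (x : Glet) {l l' : List Glet}
    (h : Relation.ReflTransGen GrigRed l l') :
    Relation.ReflTransGen GrigRed (x :: l) (x :: l') :=
  Relation.ReflTransGen.lift (x :: ·) (fun _ _ => red_cons x) _ _ h

lemma rtg_normCons (x : Glet) (l : List Glet) :
    Relation.ReflTransGen GrigRed (x :: l) (normCons x l) := by
  cases l with
  | nil => exact Relation.ReflTransGen.refl
  | cons y t =>
    by_cases hxy : x = y
    · subst hxy
      have hstep : GrigRed (x :: x :: t) t := by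
        refine ⟨[], t, [x, x], [], ?_, by simp, by simp⟩
        cases x
        exacts [GrigRule.aa, GrigRule.bb, GrigRule.cc, GrigRule.dd]
      simp only [normCons, if_pos rfl]
      exact Relation.ReflTransGen.single hstep
    · by_cases hna : x ≠ a ∧ y ≠ a
      · have hstep : GrigRed (x :: y :: t) (third x y :: t) := by
          refine ⟨[], t, [x, y], [third x y], ?_, by simp, by simp⟩
          obtain ⟨hx, hy⟩ := hna
          cases x <;> cases y <;> simp_all <;>
            first
              | exact GrigRule.bc | exact GrigRule.cb | exact GrigRule.cd
              | exact GrigRule.dc | exact GrigRule.db | exact GrigRule.bd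
        simp only [normCons, if_neg hxy, if_pos hna]
        exact Relation.ReflTransGen.single hstep
      · simp only [normCons, if_neg hxy, if_neg hna]
        exact Relation.ReflTransGen.refl

lemma rtg_norm (w : List Glet) : Relation.ReflTransGen GrigRed w (norm w) := by
  induction w with
  | nil => exact Relation.ReflTransGen.refl
  | cons x t ih =>
    exact (rtg_cons x ih).trans (rtg_normCons x (norm t))

/-- every word over `{a,b,c,d}` rewrites, via the identities
`a²=b²=c²=d²=1`, `bc=cb=d`, `cd=dc=b`, `db=bd=c`, to a unique reduced word. -/
theorem stmt_7 (w : List Glet) :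
    ∃! w' : List Glet, Relation.ReflTransGen GrigRed w w' ∧ GrigReduced w' := by
  refine ⟨norm w, ⟨rtg_norm w, red_of_chain (chain_norm w)⟩, ?_⟩
  rintro w' ⟨hr, hred⟩
  have h1 : norm w = norm w' := norm_rtg hr
  have h2 : norm w' = w' := norm_fixed (chain_of_red hred)
  rw [← h2, ← h1]
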